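/- Let R be a graded radically principal commutative G-graded ring and S a multiplicative subset of homogeneous elements of R. Then the localization S⁻¹R is a graded radically principal ring. -/

import Mathlib

open DirectSum

variable {G A : Type*} [AddGroup G] [DecidableEq G] [CommRing A]

def gradedRadical (𝒜 : G → AddSubgroup A) [GradedRing 𝒜] (I : Ideal A) : Set A :=
  {x | ∀ g : G, ∃ n : ℕ, ((DirectSum.decompose 𝒜 x g : A)) ^ n ∈ I}

def IsGradedRadicallyPrincipal (𝒜 : G → AddSubgroup A) [GradedRing 𝒜] (I : Ideal A) : Prop :=
  ∃ c : A, SetLike.IsHomogeneousElem 𝒜 c ∧ gradedRadical 𝒜 I = gradedRadical 𝒜 (Ideal.span {c})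

def GradedRadicallyPrincipalRing (𝒜 : G → AddSubgroup A) [GradedRing 𝒜] : Prop :=
  ∀ I : Ideal A, I.IsHomogeneous 𝒜 → IsGradedRadicallyPrincipal 𝒜 I

def IsGradedPrime (𝒜 : G → AddSubgroup A) [GradedRing 𝒜] (P : Ideal A) : Prop :=
  P ≠ ⊤ ∧ P.IsHomogeneous 𝒜 ∧
    ∀ ⦃x y : A⦄, SetLike.IsHomogeneousElem 𝒜 x → SetLike.IsHomogeneousElem 𝒜 y → x * y ∈ P →
      x ∈ P ∨ y ∈ P

theorem stmt_9 (𝒜 : G → AddSubgroup A) [GradedRing 𝒜]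
    (hR : GradedRadicallyPrincipalRing 𝒜) (S : Submonoid A)
    (hS : ∀ s ∈ S, SetLike.IsHomogeneousElem 𝒜 s)
    (ℬ : G → AddSubgroup (Localization S)) [GradedRing ℬ]
    (hℬ : ∀ g, (ℬ g : Set (Localization S)) =
      {x | ∃ (h : G) (a : A) (s : S), a ∈ 𝒜 h ∧ (s : A) ∈ 𝒜 (h - g) ∧
        x = Localization.mk a s}) :
    GradedRadicallyPrincipalRing ℬ := by
  intro J _hJ
  classical
  set f : A →+* Localization S := algebraMap A (Localization S) with hf
  set T : Set A := {a : A | SetLike.IsHomogeneousElem 𝒜 a ∧ f a ∈ J} with hT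
  have hTspan : Ideal.span T ≤ J.comap f := by
    rw [Ideal.span_le]; intro a ha; exact ha.2
  have hIhom : (Ideal.span T).IsHomogeneous 𝒜 :=
    Ideal.homogeneous_span 𝒜 T (fun a ha => ha.1)
  obtain ⟨c, ⟨k, hck⟩, hc⟩ := hR (Ideal.span T) hIhom
  have hcrad : c ∈ gradedRadical 𝒜 (Ideal.span T) := by
    rw [hc]
    intro g'
    by_cases hg' : g' = k
    · subst hg'
      rw [DirectSum.decompose_of_mem_same 𝒜 hck]
      exact ⟨1, by simpa using Ideal.mem_span_singleton_self c⟩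
    · exact ⟨1, by
        rw [DirectSum.decompose_of_mem_ne 𝒜 hck (Ne.symm hg'), pow_one]
        exact zero_mem _⟩
  refine ⟨f c, ⟨k, ?_⟩, ?_⟩
  · have : f c ∈ (ℬ k : Set (Localization S)) := by
      rw [hℬ k]
      exact ⟨k, c, 1, hck, by simpa using SetLike.one_mem_graded 𝒜,
        by rw [Localization.mk_one_eq_algebraMap]⟩
    exact this
  · ext x
    simp only [gradedRadical, Set.mem_setOf_eq]
    constructor
    · intro hx g
      obtain ⟨n, hn⟩ := hx g
      have hy : (DirectSum.decompose ℬ x g : Localization S) ∈ (ℬ g : Set (Localization S)) :=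
        SetLike.coe_mem _
      rw [hℬ g] at hy
      obtain ⟨h, a, s, hah, _hs, hmk⟩ := hy
      have h1 : Localization.mk a s * f (s : A) = f a := by
        rw [Localization.mk_eq_mk']; exact IsLocalization.mk'_spec _ a s
      have hfan : f (a ^ n) ∈ J := by
        rw [map_pow, ← h1, mul_pow]
        exact Ideal.mul_mem_right _ _ (by rw [← hmk]; exact hn)
      have haT : a ^ n ∈ Ideal.span T :=
        Ideal.subset_span ⟨⟨n • h, SetLike.pow_mem_graded n hah⟩, hfan⟩
      have harad : a ∈ gradedRadical 𝒜 (Ideal.span T) := by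
        intro g'
        by_cases hg' : g' = h
        · subst hg'
          rw [DirectSum.decompose_of_mem_same 𝒜 hah]
          exact ⟨n, haT⟩
        · exact ⟨1, by
            rw [DirectSum.decompose_of_mem_ne 𝒜 hah (Ne.symm hg'), pow_one]
            exact zero_mem _⟩
      rw [hc] at harad
      obtain ⟨m, hm⟩ := harad h
      rw [DirectSum.decompose_of_mem_same 𝒜 hah] at hm
      obtain ⟨r, hr⟩ := Ideal.mem_span_singleton'.mp hm
      have h2 : Localization.mk a s = f a * Localization.mk 1 s := by
        rw [← Localization.mk_one_eq_algebraMap, Localization.mk_mul, mul_one, one_mul]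
      refine ⟨m, ?_⟩
      rw [hmk, h2, mul_pow, ← map_pow, ← hr, map_mul]
      exact Ideal.mem_span_singleton'.mpr ⟨f r * (Localization.mk 1 s) ^ m, by ring⟩
    · intro hx g
      obtain ⟨n, hn⟩ := hx g
      obtain ⟨m, hm⟩ := hcrad k
      rw [DirectSum.decompose_of_mem_same 𝒜 hck] at hm
      have hfc : (f c) ^ m ∈ J := by rw [← map_pow]; exact hTspan hm
      obtain ⟨r, hr⟩ := Ideal.mem_span_singleton'.mp hn
      refine ⟨n * m, ?_⟩
      rw [pow_mul, ← hr, mul_pow]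
      exact Ideal.mul_mem_left _ _ hfc
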